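/- Let E and F be Banach spaces and T : E → F a compact bounded linear operator. Then the adjoint (dual) operator T' : F' → E', defined by ⟨T'ℓ, x⟩ = ⟨ℓ, Tx⟩, is also compact. -/

import Mathlib

open Metric Set

/-- Schauder's theorem: the Banach-space adjoint `T' : F' → E'`, `ℓ ↦ ℓ ∘ T`,
of a compact operator `T : E → F` is compact. -/
theorem adjoint_compact_of_compact
    {E F : Type*} [NormedAddCommGroup E] [NormedSpace ℝ E] [CompleteSpace E]
    [NormedAddCommGroup F] [NormedSpace ℝ F] [CompleteSpace F]
    (T : E →L[ℝ] F) (hT : IsCompactOperator T) :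
    IsCompactOperator (fun ℓ : StrongDual ℝ F => (ℓ.comp T : StrongDual ℝ E)) := by
  set Φ : StrongDual ℝ F → StrongDual ℝ E := fun ℓ => ℓ.comp T with hΦ
  set A : Set (StrongDual ℝ F) := Metric.closedBall 0 1 with hA
  -- it suffices to show the image of the dual unit ball is totally bounded
  have hTB : TotallyBounded (Φ '' A) := by
    rw [Metric.totallyBounded_iff]
    intro ε hε
    have hε4 : 0 < ε / 4 := by linarith
    -- a compact set containing the image of the unit ball under T
    have hK : IsCompact (closure (⇑T '' Metric.closedBall 0 1)) :=
      hT.isCompact_closure_image_closedBall 1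
    set K : Set F := closure (⇑T '' Metric.closedBall 0 1) with hKdef
    obtain ⟨t, htfin, htcov⟩ := (Metric.totallyBounded_iff.mp hK.totallyBounded) (ε/4) hε4
    haveI : Fintype ↥t := htfin.fintype
    -- evaluation map on the finite net
    set ψ : StrongDual ℝ F → (↥t → ℝ) := fun ℓ y => ℓ (y : F) with hψ
    have himg : ψ '' A ⊆ Set.pi Set.univ (fun y : ↥t => Metric.closedBall 0 ‖(y : F)‖) := by
      rintro _ ⟨ℓ, hℓ, rfl⟩ y _
      have hℓn : ‖ℓ‖ ≤ 1 := by
        simpa using mem_closedBall_iff_norm.mp hℓ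
      simp only [hψ, Metric.mem_closedBall, dist_zero_right]
      calc ‖ℓ (y : F)‖ ≤ ‖ℓ‖ * ‖(y : F)‖ := ℓ.le_opNorm _
        _ ≤ 1 * ‖(y : F)‖ := by
            exact mul_le_mul_of_nonneg_right hℓn (norm_nonneg _)
        _ = ‖(y : F)‖ := one_mul _
    have hψTB : TotallyBounded (ψ '' A) :=
      TotallyBounded.subset himg
        ((isCompact_univ_pi fun y => isCompact_closedBall _ _).totallyBounded)
    obtain ⟨u, huA, hufin, hucov⟩ :=
      EMetric.totallyBounded_iff'.mp hψTB (ENNReal.ofReal (ε/4)) (ENNReal.ofReal_pos.mpr hε4)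
    -- pick representatives in A for each point of the net u
    choose rep hrepA hrep using fun z (hz : z ∈ u) => huA hz
    haveI := hufin.to_subtype
    refine ⟨(fun z : ↥u => Φ (rep z z.2)) '' Set.univ, (Set.finite_univ.image _), ?_⟩
    rintro _ ⟨ℓ, hℓA, rfl⟩
    obtain ⟨z, hz, hzd⟩ := Set.mem_iUnion₂.mp (hucov ⟨ℓ, hℓA, rfl⟩)
    refine Set.mem_iUnion₂.mpr ⟨Φ (rep z hz), ⟨⟨⟨z, hz⟩, Set.mem_univ _, rfl⟩, ?_⟩⟩
    -- main estimate
    set ℓ' := rep z hz with hℓ'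
    have hℓn : ‖ℓ‖ ≤ 1 := by simpa using mem_closedBall_iff_norm.mp hℓA
    have hℓ'n : ‖ℓ'‖ ≤ 1 := by simpa using mem_closedBall_iff_norm.mp (hrepA z hz)
    have hnet : ∀ y : ↥t, |ℓ (y : F) - ℓ' (y : F)| < ε / 4 := by
      intro y
      have h1 : dist (ψ ℓ) z < ε / 4 := by
        rwa [EMetric.mem_ball, edist_lt_ofReal] at hzd
      have h2 : dist (ψ ℓ y) (z y) ≤ dist (ψ ℓ) z := dist_le_pi_dist _ _ y
      have h3 : z = ψ ℓ' := (hrep z hz).symm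
      rw [h3] at h2
      calc |ℓ (y : F) - ℓ' (y : F)| = dist (ψ ℓ y) (ψ ℓ' y) := by
            simp [hψ, Real.dist_eq]
        _ ≤ dist (ψ ℓ) z := by rw [h3]; exact dist_le_pi_dist _ _ y
        _ < ε / 4 := h1
    have hkey : ∀ v : E, ‖v‖ ≤ 1 → ‖(Φ ℓ - Φ ℓ') v‖ ≤ 3 * (ε / 4) := by
      intro v hv
      have hTv : T v ∈ K := subset_closure ⟨v, by simpa using hv, rfl⟩
      obtain ⟨y, hyt, hyd⟩ := Set.mem_iUnion₂.mp (htcov hTv)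
      have hyd' : ‖T v - y‖ < ε / 4 := by
        rwa [Metric.mem_ball, dist_eq_norm] at hyd
      have e1 : ‖ℓ (T v) - ℓ y‖ ≤ ε / 4 := by
        calc ‖ℓ (T v) - ℓ y‖ = ‖ℓ (T v - y)‖ := by rw [map_sub]
          _ ≤ ‖ℓ‖ * ‖T v - y‖ := ℓ.le_opNorm _
          _ ≤ 1 * (ε / 4) := by
              exact mul_le_mul hℓn hyd'.le (norm_nonneg _) zero_le_one
          _ = ε / 4 := one_mul _
      have e2 : ‖ℓ y - ℓ' y‖ ≤ ε / 4 := by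
        have := hnet ⟨y, hyt⟩
        simpa [Real.norm_eq_abs] using this.le
      have e3 : ‖ℓ' y - ℓ' (T v)‖ ≤ ε / 4 := by
        calc ‖ℓ' y - ℓ' (T v)‖ = ‖ℓ' (y - T v)‖ := by rw [map_sub]
          _ ≤ ‖ℓ'‖ * ‖y - T v‖ := ℓ'.le_opNorm _
          _ ≤ 1 * (ε / 4) := by
              refine mul_le_mul hℓ'n ?_ (norm_nonneg _) zero_le_one
              rw [norm_sub_rev]; exact hyd'.le
          _ = ε / 4 := one_mul _
      have : (Φ ℓ - Φ ℓ') v = (ℓ (T v) - ℓ y) + (ℓ y - ℓ' y) + (ℓ' y - ℓ' (T v)) := by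
        simp only [hΦ, ContinuousLinearMap.sub_apply, ContinuousLinearMap.comp_apply]
        ring
      rw [this]
      calc ‖(ℓ (T v) - ℓ y) + (ℓ y - ℓ' y) + (ℓ' y - ℓ' (T v))‖
          ≤ ‖(ℓ (T v) - ℓ y) + (ℓ y - ℓ' y)‖ + ‖ℓ' y - ℓ' (T v)‖ := norm_add_le _ _
        _ ≤ ‖ℓ (T v) - ℓ y‖ + ‖ℓ y - ℓ' y‖ + ‖ℓ' y - ℓ' (T v)‖ := by
            have := norm_add_le (ℓ (T v) - ℓ y) (ℓ y - ℓ' y)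
            linarith
        _ ≤ 3 * (ε / 4) := by linarith
    have hnorm : ‖Φ ℓ - Φ ℓ'‖ ≤ 3 * (ε / 4) := by
      refine ContinuousLinearMap.opNorm_le_bound _ (by linarith) fun v => ?_
      rcases eq_or_ne v 0 with rfl | hv0
      · simp
      · have hvn : 0 < ‖v‖ := norm_pos_iff.mpr hv0
        have hu : ‖(‖v‖⁻¹ • v)‖ ≤ 1 := by
          rw [norm_smul, norm_inv, norm_norm, inv_mul_cancel₀ hvn.ne']
        have := hkey (‖v‖⁻¹ • v) hu
        have heq : (Φ ℓ - Φ ℓ') (‖v‖⁻¹ • v) = ‖v‖⁻¹ • (Φ ℓ - Φ ℓ') v := by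
          rw [map_smul]
        rw [heq, norm_smul, norm_inv, norm_norm] at this
        calc ‖(Φ ℓ - Φ ℓ') v‖ = ‖v‖ * (‖v‖⁻¹ * ‖(Φ ℓ - Φ ℓ') v‖) := by
              field_simp
          _ ≤ ‖v‖ * (3 * (ε / 4)) := by
              exact mul_le_mul_of_nonneg_left this (norm_nonneg _)
          _ = 3 * (ε / 4) * ‖v‖ := by ring
    rw [Metric.mem_ball, dist_eq_norm]
    calc ‖Φ ℓ - Φ ℓ'‖ ≤ 3 * (ε / 4) := hnorm
      _ < ε := by linarith
  -- conclude compactness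
  rw [isCompactOperator_iff_exists_mem_nhds_image_subset_compact]
  refine ⟨A, closedBall_mem_nhds _ one_pos, closure (Φ '' A), ?_, ?_⟩
  · exact TotallyBounded.isCompact_of_isClosed hTB.closure isClosed_closure
  · exact subset_closure
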